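/- A unit-area non-convex pentagon has perimeter strictly greater than 4, the perimeter of the unit square. -/

import Mathlib

open Finset

noncomputable section

abbrev Pt : Type := EuclideanSpace ℝ (Fin 2)

def cross2 (p q : Pt) : ℝ := p 0 * q 1 - p 1 * q 0

def perimeter {n : ℕ} [NeZero n] (v : Fin n → Pt) : ℝ :=
  ∑ i, dist (v i) (v (i + 1))

def shoelace {n : ℕ} [NeZero n] (v : Fin n → Pt) : ℝ :=
  (∑ i, (v i 0 * v (i + 1) 1 - v (i + 1) 0 * v i 1)) / 2

def polyArea {n : ℕ} [NeZero n] (v : Fin n → Pt) : ℝ := |shoelace v|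

def IsSimplePolygon {n : ℕ} [NeZero n] (v : Fin n → Pt) : Prop :=
  Function.Injective v ∧
  (∀ i : Fin n,
    segment ℝ (v i) (v (i + 1)) ∩ segment ℝ (v (i + 1)) (v (i + 1 + 1)) = {v (i + 1)}) ∧
  (∀ i j : Fin n, j ≠ i → j ≠ i + 1 → j + 1 ≠ i →
    segment ℝ (v i) (v (i + 1)) ∩ segment ℝ (v j) (v (j + 1)) = ∅)

/-- A simple, positively (counterclockwise) oriented polygon. -/
def IsPolygon {n : ℕ} [NeZero n] (v : Fin n → Pt) : Prop :=
  IsSimplePolygon v ∧ 0 < shoelace v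

/-- Interior angle at vertex `i` of a positively oriented simple polygon:
the unoriented angle at a convex (left-turn) vertex, and its reflex complement
at a right-turn vertex. -/
def interiorAngle {n : ℕ} [NeZero n] (v : Fin n → Pt) (i : Fin n) : ℝ :=
  if 0 ≤ cross2 (v i - v (i - 1)) (v (i + 1) - v i) then
    EuclideanGeometry.angle (v (i - 1)) (v i) (v (i + 1))
  else 2 * Real.pi - EuclideanGeometry.angle (v (i - 1)) (v i) (v (i + 1))

def IsConvexPolygon {n : ℕ} [NeZero n] (v : Fin n → Pt) : Prop :=
  IsPolygon v ∧ ∀ i, interiorAngle v i ≤ Real.pi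

/-- The polygon is circumscribed about a circle: every edge is tangent to a
common circle of radius `r` centered at `c`. -/
def IsCircumscribed {n : ℕ} [NeZero n] (v : Fin n → Pt) : Prop :=
  ∃ c : Pt, ∃ r : ℝ, 0 < r ∧
    ∀ i : Fin n, Metric.infDist c (segment ℝ (v i) (v (i + 1))) = r

/-- The polygon is inscribed in a circle: all vertices lie on a common circle. -/
def IsInscribed {n : ℕ} [NeZero n] (v : Fin n → Pt) : Prop :=
  ∃ c : Pt, ∃ r : ℝ, ∀ i : Fin n, dist c (v i) = r

def longestEdge {n : ℕ} [NeZero n] (v : Fin n → Pt) : ℝ :=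
  Finset.univ.sup' Finset.univ_nonempty (fun i => dist (v i) (v (i + 1)))



lemma dist_coords (p q : Pt) : dist p q = Real.sqrt ((q 0 - p 0)^2 + (q 1 - p 1)^2) := by
  rw [EuclideanSpace.dist_eq, Fin.sum_univ_two]
  congr 1
  rw [Real.dist_eq, Real.dist_eq, sq_abs, sq_abs]; ring

lemma cross_le' (p q r s : Pt) :
    (q 0 - p 0) * (s 1 - r 1) - (q 1 - p 1) * (s 0 - r 0) ≤ dist p q * dist r s := by
  rw [dist_coords, dist_coords, ← Real.sqrt_mul (by positivity)]
  calc (q 0 - p 0) * (s 1 - r 1) - (q 1 - p 1) * (s 0 - r 0)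
      ≤ |(q 0 - p 0) * (s 1 - r 1) - (q 1 - p 1) * (s 0 - r 0)| := le_abs_self _
    _ = Real.sqrt (((q 0 - p 0) * (s 1 - r 1) - (q 1 - p 1) * (s 0 - r 0))^2) :=
        (Real.sqrt_sq_eq_abs _).symm
    _ ≤ _ := Real.sqrt_le_sqrt (by nlinarith [sq_nonneg ((q 0 - p 0)*(s 0 - r 0) + (q 1 - p 1)*(s 1 - r 1))])

lemma shoelace_shift (v : Fin 5 → Pt) (k : Fin 5) :
    shoelace (fun j => v (j + k)) = shoelace v := by
  unfold shoelace
  congr 1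
  have h : ∀ j : Fin 5, j + 1 + k = j + k + 1 := fun j => by open Fin.CommRing in ring
  simp_rw [h]
  exact Equiv.sum_comp (Equiv.addRight k) (fun j => v j 0 * v (j + 1) 1 - v (j + 1) 0 * v j 1)

lemma perimeter_shift (v : Fin 5 → Pt) (k : Fin 5) :
    perimeter (fun j => v (j + k)) = perimeter v := by
  unfold perimeter
  have h : ∀ j : Fin 5, j + 1 + k = j + k + 1 := fun j => by open Fin.CommRing in ring
  simp_rw [h]
  exact Equiv.sum_comp (Equiv.addRight k) (fun j => dist (v j) (v (j + 1)))

lemma main5 (w : Fin 5 → Pt) (hS : shoelace w = 1)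
    (hc : cross2 (w 2 - w 1) (w 3 - w 2) < 0) : 4 < perimeter w := by
  simp only [shoelace, Fin.sum_univ_five, show ((0:Fin 5)+1) = 1 from rfl,
    show ((1:Fin 5)+1) = 2 from rfl, show ((2:Fin 5)+1) = 3 from rfl,
    show ((3:Fin 5)+1) = 4 from rfl, show ((4:Fin 5)+1) = 0 from rfl] at hS
  simp only [cross2, PiLp.sub_apply] at hc
  have H1 := cross_le' (w 0) (w 1) (w 1) (w 3)
  have H2 := cross_le' (w 3) (w 4) (w 4) (w 0)
  have H3 := cross_le' (w 1) (w 3) (w 3) (w 4)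
  have H4 := cross_le' (w 4) (w 0) (w 0) (w 1)
  have E1 : (w 1 0 - w 0 0) * (w 3 1 - w 1 1) - (w 1 1 - w 0 1) * (w 3 0 - w 1 0)
      + ((w 4 0 - w 3 0) * (w 0 1 - w 4 1) - (w 4 1 - w 3 1) * (w 0 0 - w 4 0))
      = 2 - ((w 2 0 - w 1 0) * (w 3 1 - w 2 1) - (w 2 1 - w 1 1) * (w 3 0 - w 2 0)) := by
    linear_combination 2 * hS
  have E2 : (w 3 0 - w 1 0) * (w 4 1 - w 3 1) - (w 3 1 - w 1 1) * (w 4 0 - w 3 0)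
      + ((w 0 0 - w 4 0) * (w 1 1 - w 0 1) - (w 0 1 - w 4 1) * (w 1 0 - w 0 0))
      = 2 - ((w 2 0 - w 1 0) * (w 3 1 - w 2 1) - (w 2 1 - w 1 1) * (w 3 0 - w 2 0)) := by
    linear_combination 2 * hS
  set a := dist (w 0) (w 1) with ha
  set b := dist (w 1) (w 3) with hb
  set c := dist (w 3) (w 4) with hcc
  set d := dist (w 4) (w 0) with hd
  have hprod : 4 < (a + c) * (b + d) := by nlinarith
  have hL2 : 16 < (a + b + c + d)^2 := by nlinarith [sq_nonneg (a + c - b - d)]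
  have hL : 4 < a + b + c + d := by
    nlinarith [dist_nonneg (x := w 0) (y := w 1), dist_nonneg (x := w 1) (y := w 3),
      dist_nonneg (x := w 3) (y := w 4), dist_nonneg (x := w 4) (y := w 0)]
  have tri := dist_triangle (w 1) (w 2) (w 3)
  simp only [perimeter, Fin.sum_univ_five, show ((0:Fin 5)+1) = 1 from rfl,
    show ((1:Fin 5)+1) = 2 from rfl, show ((2:Fin 5)+1) = 3 from rfl,
    show ((3:Fin 5)+1) = 4 from rfl, show ((4:Fin 5)+1) = 0 from rfl]
  linarith

theorem stmt2 (v : Fin 5 → Pt) (hP : IsPolygon v) (harea : polyArea v = 1)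
    (hnonconvex : ∃ i, Real.pi < interiorAngle v i) :
    4 < perimeter v := by
  obtain ⟨i, hi⟩ := hnonconvex
  have hcross : cross2 (v i - v (i - 1)) (v (i + 1) - v i) < 0 := by
    by_contra h
    push_neg at h
    rw [interiorAngle, if_pos h] at hi
    exact absurd hi (not_lt.2 (EuclideanGeometry.angle_le_pi _ _ _))
  have hS : shoelace v = 1 := by
    rw [polyArea, abs_of_pos hP.2] at harea
    exact harea
  have key := main5 (fun j => v (j + (i - 2)))
    (by rw [shoelace_shift]; exact hS)
    (by
      show cross2 (v (2 + (i - 2)) - v (1 + (i - 2))) (v (3 + (i - 2)) - v (2 + (i - 2))) < 0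
      rw [show (2 + (i - 2) : Fin 5) = i by open Fin.CommRing in ring, show (1 + (i - 2) : Fin 5) = i - 1 by open Fin.CommRing in ring,
        show (3 + (i - 2) : Fin 5) = i + 1 by open Fin.CommRing in ring]
      exact hcross)
  rwa [perimeter_shift] at key

end
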